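/- Let K, T ⊂ ℝⁿ be centrally symmetric convex bodies which are 2-convex with constants γ_K > 0 and γ_T > 0 respectively. Define their 2-Firey sum K +₂ T as the unit ball of the norm ‖z‖_{K+₂T} = (inf{‖x‖_K² + ‖y‖_T² : z = x + y})^{1/2}. Then K +₂ T is a centrally symmetric convex body which is 2-convex with constant min(γ_K, γ_T)/8. -/

import Mathlib

open MeasureTheory
open scoped RealInnerProductSpace

noncomputable section

/-- A centrally symmetric convex body: compact, convex, with nonempty interior,
and symmetric about the origin. -/
def IsSymmConvexBody {E : Type*} [NormedAddCommGroup E] [NormedSpace ℝ E]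
    (K : Set E) : Prop :=
  IsCompact K ∧ Convex ℝ K ∧ (interior K).Nonempty ∧ K = -K

/-- The modulus of convexity of `K`, defined via the gauge (Minkowski functional) of `K`. -/
def modulusOfConvexity {E : Type*} [AddCommGroup E] [Module ℝ E]
    (K : Set E) (ε : ℝ) : ℝ :=
  sInf { d | ∃ x y : E, gauge K x ≤ 1 ∧ gauge K y ≤ 1 ∧ ε ≤ gauge K (x - y) ∧
    d = 1 - gauge K ((2:ℝ)⁻¹ • (x + y)) }

/-- `K` is 2-convex with constant `α`: `δ_K(ε) ≥ α ε²` for all `0 < ε ≤ 2`. -/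
def IsTwoConvex {E : Type*} [AddCommGroup E] [Module ℝ E]
    (K : Set E) (α : ℝ) : Prop :=
  ∀ ε : ℝ, 0 < ε → ε ≤ 2 → α * ε ^ 2 ≤ modulusOfConvexity K ε

/-- The 2-Firey sum `K +₂ T`: the unit ball of the norm
`‖z‖² = inf { ‖x‖_K² + ‖y‖_T² : z = x + y }`. -/
def fireySum {E : Type*} [AddCommGroup E] [Module ℝ E]
    (K T : Set E) : Set E :=
  { z | sInf { d | ∃ x y : E, z = x + y ∧ d = gauge K x ^ 2 + gauge T y ^ 2 } ≤ 1 }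

section Aux

variable {E : Type*} [NormedAddCommGroup E] [NormedSpace ℝ E] {K : Set E}

lemma IsSymmConvexBody.neg_mem (hK : IsSymmConvexBody K) {x : E} (hx : x ∈ K) : -x ∈ K := by
  rw [hK.2.2.2]; rwa [Set.mem_neg, neg_neg]

lemma IsSymmConvexBody.zero_mem_interior (hK : IsSymmConvexBody K) :
    (0 : E) ∈ interior K := by
  obtain ⟨x, hx⟩ := hK.2.2.1
  have hsub : -interior K ⊆ K := by
    intro y hy
    rw [Set.mem_neg] at hy
    have h1 : -y ∈ K := interior_subset hy
    have := hK.neg_mem h1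
    rwa [neg_neg] at this
  have h2 : -interior K ⊆ interior K := interior_maximal hsub isOpen_interior.neg
  have hx' : -x ∈ interior K := h2 (by rwa [Set.mem_neg, neg_neg])
  have h0 := (hK.2.1.interior) hx hx' (by norm_num : (0:ℝ) ≤ 1/2)
    (by norm_num : (0:ℝ) ≤ 1/2) (by norm_num)
  simpa using h0

lemma IsSymmConvexBody.absorbent (hK : IsSymmConvexBody K) : Absorbent ℝ K :=
  absorbent_nhds_zero (mem_interior_iff_mem_nhds.1 hK.zero_mem_interior)

lemma IsSymmConvexBody.gauge_neg' (hK : IsSymmConvexBody K) (x : E) :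
    gauge K (-x) = gauge K x :=
  gauge_neg (fun _ hy => hK.neg_mem hy) x

lemma IsSymmConvexBody.gauge_add (hK : IsSymmConvexBody K) (x y : E) :
    gauge K (x + y) ≤ gauge K x + gauge K y :=
  gauge_add_le hK.2.1 hK.absorbent x y

lemma IsSymmConvexBody.gauge_sub (hK : IsSymmConvexBody K) (x y : E) :
    gauge K (x - y) ≤ gauge K x + gauge K y := by
  rw [sub_eq_add_neg]
  calc gauge K (x + -y) ≤ gauge K x + gauge K (-y) := hK.gauge_add x (-y)
    _ = gauge K x + gauge K y := by rw [hK.gauge_neg']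

/-- midpoint bound -/
lemma IsSymmConvexBody.gauge_mid (hK : IsSymmConvexBody K) (x y : E) :
    gauge K ((2:ℝ)⁻¹ • (x + y)) ≤ (gauge K x + gauge K y) / 2 := by
  rw [gauge_smul_of_nonneg (by norm_num : (0:ℝ) ≤ 2⁻¹)]
  have := hK.gauge_add x y
  simp only [smul_eq_mul]
  linarith

lemma IsSymmConvexBody.exists_gauge_le (hK : IsSymmConvexBody K) :
    ∃ r > 0, ∀ x : E, gauge K x ≤ ‖x‖ / r := by
  obtain ⟨r, hr, hball⟩ := Metric.mem_nhds_iff.1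
    (mem_interior_iff_mem_nhds.1 hK.zero_mem_interior)
  refine ⟨r, hr, fun x => ?_⟩
  rw [← gauge_ball hr.le]
  exact gauge_mono (absorbent_ball_zero hr) hball x

lemma IsSymmConvexBody.exists_norm_le (hK : IsSymmConvexBody K) :
    ∃ R > 0, ∀ x : E, ‖x‖ ≤ R * gauge K x := by
  obtain ⟨R, hR, hsub⟩ := hK.1.isBounded.subset_closedBall_lt 0 0
  refine ⟨R, hR, fun x => ?_⟩
  have h1 : gauge (Metric.closedBall (0:E) R) x ≤ gauge K x :=
    gauge_mono hK.absorbent hsub x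
  rw [gauge_closedBall hR.le] at h1
  rw [div_le_iff₀ hR] at h1
  linarith [h1]

end Aux

section StepA

variable {E : Type*} [NormedAddCommGroup E] [NormedSpace ℝ E] {K : Set E}

/-- The set defining the modulus of convexity is bounded below by `0`. -/
lemma modSet_bddBelow (hK : IsSymmConvexBody K) (ε : ℝ) :
    ∀ d ∈ { d | ∃ x y : E, gauge K x ≤ 1 ∧ gauge K y ≤ 1 ∧ ε ≤ gauge K (x - y) ∧
      d = 1 - gauge K ((2:ℝ)⁻¹ • (x + y)) }, (0:ℝ) ≤ d := by
  rintro d ⟨x, y, hx, hy, -, rfl⟩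
  have := hK.gauge_mid x y
  linarith

/-- Step A: the two-convexity hypothesis in pointwise form on the unit ball. -/
lemma stepA (hK : IsSymmConvexBody K) {γ : ℝ} (h2 : IsTwoConvex K γ) {u v : E}
    (hu : gauge K u ≤ 1) (hv : gauge K v ≤ 1) :
    gauge K ((2:ℝ)⁻¹ • (u + v)) ≤ 1 - γ * gauge K (u - v) ^ 2 := by
  have hε0 : 0 ≤ gauge K (u - v) := gauge_nonneg _
  rcases eq_or_lt_of_le hε0 with h0 | hpos
  · have hmid := hK.gauge_mid u v
    rw [← h0]
    have : gauge K ((2:ℝ)⁻¹ • (u + v)) ≤ 1 := by linarith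
    simpa using this
  · have hε2 : gauge K (u - v) ≤ 2 := by
      have := hK.gauge_sub u v; linarith
    have h := h2 _ hpos hε2
    have hle : modulusOfConvexity K (gauge K (u - v)) ≤
        1 - gauge K ((2:ℝ)⁻¹ • (u + v)) := by
      apply csInf_le ⟨0, fun d hd => modSet_bddBelow hK _ d hd⟩
      exact ⟨u, v, hu, hv, le_refl _, rfl⟩
    linarith

set_option maxHeartbeats 1000000 in
/-- The main quadratic two-point inequality, asymmetric version. -/
lemma gauge_sq_strong_aux (hK : IsSymmConvexBody K) {γ : ℝ} (hγ : 0 < γ) (hγ4 : γ ≤ 1/4)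
    (h2 : IsTwoConvex K γ) (a b : E) (hBA : gauge K b ≤ gauge K a) :
    gauge K ((2:ℝ)⁻¹ • (a + b)) ^ 2 + γ * gauge K ((2:ℝ)⁻¹ • (a - b)) ^ 2
      ≤ (gauge K a ^ 2 + gauge K b ^ 2) / 2 := by
  set A := gauge K a with hA_def
  set B := gauge K b with hB_def
  set C := gauge K ((2:ℝ)⁻¹ • (a + b)) with hC_def
  set Eg := gauge K ((2:ℝ)⁻¹ • (a - b)) with hE_def
  have hA0 : 0 ≤ A := gauge_nonneg _
  have hB0 : 0 ≤ B := gauge_nonneg _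
  have hC0 : 0 ≤ C := gauge_nonneg _
  have hE0 : 0 ≤ Eg := gauge_nonneg _
  have hCab : C ≤ (A + B) / 2 := hK.gauge_mid a b
  have hEab : Eg ≤ (A + B) / 2 := by
    have h := hK.gauge_mid a (-b)
    rw [hK.gauge_neg'] at h
    rw [hE_def, show a - b = a + -b from sub_eq_add_neg a b]
    exact h
  rcases le_or_gt B 0 with hB | hB
  · -- B = 0 case
    have hBz : B = 0 := le_antisymm hB hB0
    rw [hBz]
    rw [hBz] at hCab hEab
    nlinarith [hCab, hEab]
  · -- main case: 0 < B ≤ A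
    have hA : 0 < A := lt_of_lt_of_le hB hBA
    set u : E := A⁻¹ • a with hu_def
    set v : E := B⁻¹ • b with hv_def
    have hgu : gauge K u = 1 := by
      rw [hu_def, gauge_smul_of_nonneg (inv_nonneg.2 hA.le), smul_eq_mul, ← hA_def,
        inv_mul_cancel₀ hA.ne']
    have hgv : gauge K v = 1 := by
      rw [hv_def, gauge_smul_of_nonneg (inv_nonneg.2 hB.le), smul_eq_mul, ← hB_def,
        inv_mul_cancel₀ hB.ne']
    set G := gauge K (u - v) with hG_def
    set M := gauge K ((2:ℝ)⁻¹ • (u + v)) with hM_def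
    have hG0 : 0 ≤ G := gauge_nonneg _
    have hM0 : 0 ≤ M := gauge_nonneg _
    have hG2 : G ≤ 2 := by
      have := hK.gauge_sub u v; rw [hgu, hgv] at this; linarith
    have h1 : M ≤ 1 - γ * G ^ 2 := stepA hK h2 (le_of_eq hgu) (le_of_eq hgv)
    -- midpoint relation
    have hmid : (2:ℝ)⁻¹ • (a + b) = B • ((2:ℝ)⁻¹ • (u + v)) + ((A - B)/(2*A)) • a := by
      rw [hu_def, hv_def]
      match_scalars
      · field_simp; ring
      · field_simp
    have hC_le : C ≤ B * M + (A - B)/2 := by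
      calc C = gauge K (B • ((2:ℝ)⁻¹ • (u + v)) + ((A - B)/(2*A)) • a) := by
              rw [hC_def, hmid]
        _ ≤ gauge K (B • ((2:ℝ)⁻¹ • (u + v))) + gauge K (((A - B)/(2*A)) • a) :=
              hK.gauge_add _ _
        _ = B * M + ((A - B)/(2*A)) * A := by
              rw [gauge_smul_of_nonneg hB.le, gauge_smul_of_nonneg
                (div_nonneg (by linarith) (by linarith) : (0:ℝ) ≤ (A - B)/(2*A))]
              simp [smul_eq_mul, hM_def, hA_def]
        _ = B * M + (A - B)/2 := by field_simp
    -- difference relation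
    have hdiffeq : a - b = B • (u - v) + ((A - B)/A) • a := by
      rw [hu_def, hv_def]
      match_scalars
      · field_simp; ring
      · field_simp
    have hab2 : gauge K (a - b) = 2 * Eg := by
      have : a - b = (2:ℝ) • ((2:ℝ)⁻¹ • (a - b)) := by
        rw [smul_smul]; norm_num
      rw [this, gauge_smul_of_nonneg (by norm_num : (0:ℝ) ≤ 2)]
      simp [smul_eq_mul, hE_def]
    have hdiff : 2 * Eg ≤ B * G + (A - B) := by
      calc 2 * Eg = gauge K (a - b) := hab2.symm
        _ = gauge K (B • (u - v) + ((A - B)/A) • a) := by rw [hdiffeq]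
        _ ≤ gauge K (B • (u - v)) + gauge K (((A - B)/A) • a) := hK.gauge_add _ _
        _ = B * G + ((A - B)/A) * A := by
              rw [gauge_smul_of_nonneg hB.le, gauge_smul_of_nonneg
                (div_nonneg (by linarith) (by linarith) : (0:ℝ) ≤ (A - B)/A)]
              simp [smul_eq_mul, hG_def, hA_def]
        _ = B * G + (A - B) := by field_simp
    -- arithmetic
    obtain ⟨q, hq_def⟩ : ∃ q, q = γ * B * G ^ 2 := ⟨_, rfl⟩
    have hq0 : 0 ≤ q := by rw [hq_def]; positivity
    have hG4 : G ^ 2 ≤ 4 := by nlinarith [hG0, hG2]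
    have hqB : q ≤ B := by
      rw [hq_def]
      nlinarith [mul_nonneg (mul_nonneg hγ.le hB.le) (by linarith : (0:ℝ) ≤ 4 - G^2),
        mul_nonneg hB.le (by linarith : (0:ℝ) ≤ 1 - 4*γ)]
    have hBMq : B * (1 - γ * G ^ 2) = B - q := by rw [hq_def]; ring
    have hCW : C ≤ (A + B)/2 - q := by
      have hBM : B * M ≤ B * (1 - γ * G ^ 2) := mul_le_mul_of_nonneg_left h1 hB.le
      linarith [hC_le, hBM, hBMq.le, hBMq.ge]
    have hC2 : C ^ 2 ≤ ((A + B)/2 - q) ^ 2 := by nlinarith [hC0, hCW]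
    have hC2' : C ^ 2 ≤ (A^2 + B^2)/2 - (A - B)^2/4 - q * A := by
      nlinarith [hC2, mul_le_mul_of_nonneg_left hqB hq0]
    have hEg2 : Eg ^ 2 ≤ ((A - B + B * G)/2) ^ 2 := by
      nlinarith [hdiff, hE0, mul_nonneg hB.le hG0]
    have key : γ * Eg ^ 2 ≤ (A - B)^2/4 + γ * (B*G)^2 := by
      have h4 : γ * Eg ^ 2 ≤ γ * ((A - B + B * G)/2) ^ 2 :=
        mul_le_mul_of_nonneg_left hEg2 hγ.le
      nlinarith [h4, mul_nonneg hγ.le (sq_nonneg (A - B - 3*(B*G))),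
        mul_nonneg (by linarith : (0:ℝ) ≤ 3 - 4*γ) (sq_nonneg (A - B))]
    have hqA : q * B ≤ q * A := mul_le_mul_of_nonneg_left hBA hq0
    have hqt : γ * (B*G)^2 = q * B := by rw [hq_def]; ring
    linarith [hC2', key, hqA, hqt.le, hqt.ge]

/-- Symmetrized version. -/
lemma gauge_sq_strong (hK : IsSymmConvexBody K) {γ : ℝ} (hγ : 0 < γ) (hγ4 : γ ≤ 1/4)
    (h2 : IsTwoConvex K γ) (a b : E) :
    gauge K ((2:ℝ)⁻¹ • (a + b)) ^ 2 + γ * gauge K ((2:ℝ)⁻¹ • (a - b)) ^ 2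
      ≤ (gauge K a ^ 2 + gauge K b ^ 2) / 2 := by
  rcases le_total (gauge K b) (gauge K a) with h | h
  · exact gauge_sq_strong_aux hK hγ hγ4 h2 a b h
  · have := gauge_sq_strong_aux hK hγ hγ4 h2 b a h
    have e1 : (2:ℝ)⁻¹ • (b + a) = (2:ℝ)⁻¹ • (a + b) := by rw [add_comm]
    have e2 : gauge K ((2:ℝ)⁻¹ • (b - a)) = gauge K ((2:ℝ)⁻¹ • (a - b)) := by
      rw [show (2:ℝ)⁻¹ • (b - a) = -((2:ℝ)⁻¹ • (a - b)) by rw [← smul_neg, neg_sub]]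
      exact hK.gauge_neg' _
    rw [e1, e2] at this
    linarith

end StepA

section Phi

variable {E : Type*} [NormedAddCommGroup E] [NormedSpace ℝ E] (K T : Set E)

/-- The squared Firey gauge. -/
def phiF (z : E) : ℝ :=
  sInf { d | ∃ x y : E, z = x + y ∧ d = gauge K x ^ 2 + gauge T y ^ 2 }

lemma fireySum_eq : fireySum K T = { z | phiF K T z ≤ 1 } := rfl

variable {K T}

lemma phiF_set_nonempty (z : E) :
    { d | ∃ x y : E, z = x + y ∧ d = gauge K x ^ 2 + gauge T y ^ 2 }.Nonempty :=
  ⟨gauge K z ^ 2 + gauge T 0 ^ 2, z, 0, (add_zero z).symm, rfl⟩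

lemma phiF_set_bddBelow (z : E) :
    BddBelow { d | ∃ x y : E, z = x + y ∧ d = gauge K x ^ 2 + gauge T y ^ 2 } := by
  refine ⟨0, ?_⟩
  rintro d ⟨x, y, -, rfl⟩
  positivity

lemma phiF_nonneg (z : E) : 0 ≤ phiF K T z := by
  apply le_csInf (phiF_set_nonempty z)
  rintro d ⟨x, y, -, rfl⟩
  positivity

lemma phiF_le {z x y : E} (h : z = x + y) :
    phiF K T z ≤ gauge K x ^ 2 + gauge T y ^ 2 :=
  csInf_le (phiF_set_bddBelow z) ⟨x, y, h, rfl⟩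

lemma phiF_le_gauge_sq (z : E) : phiF K T z ≤ gauge K z ^ 2 := by
  have h := phiF_le (K := K) (T := T) (add_zero z).symm
  simpa using h

lemma phiF_decomp (z : E) {θ : ℝ} (hθ : 0 < θ) :
    ∃ x y : E, z = x + y ∧ gauge K x ^ 2 + gauge T y ^ 2 < phiF K T z + θ := by
  obtain ⟨d, ⟨x, y, hz, rfl⟩, hlt⟩ :=
    exists_lt_of_csInf_lt (phiF_set_nonempty z) (lt_add_of_pos_right (phiF K T z) hθ)
  exact ⟨x, y, hz, hlt⟩

lemma phiF_zero : phiF K T (0 : E) = 0 := by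
  refine le_antisymm ?_ (phiF_nonneg 0)
  have := phiF_le_gauge_sq (K := K) (T := T) (0 : E)
  simpa [gauge_zero] using this

lemma phiF_smul_le {r : ℝ} (hr : 0 < r) (z : E) :
    phiF K T (r • z) ≤ r ^ 2 * phiF K T z := by
  refine le_of_forall_pos_le_add fun θ hθ => ?_
  obtain ⟨x, y, hz, hlt⟩ := phiF_decomp (K := K) (T := T) z
    (show (0:ℝ) < θ / r ^ 2 by positivity)
  have hdec : r • z = r • x + r • y := by rw [hz, smul_add]
  calc phiF K T (r • z) ≤ gauge K (r • x) ^ 2 + gauge T (r • y) ^ 2 := phiF_le hdec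
    _ = r ^ 2 * (gauge K x ^ 2 + gauge T y ^ 2) := by
        rw [gauge_smul_of_nonneg hr.le, gauge_smul_of_nonneg hr.le]
        simp [smul_eq_mul]; ring
    _ ≤ r ^ 2 * (phiF K T z + θ / r ^ 2) := by
        have := hlt.le
        have h2 : (0:ℝ) ≤ r ^ 2 := by positivity
        exact mul_le_mul_of_nonneg_left (by linarith) h2
    _ = r ^ 2 * phiF K T z + θ := by field_simp
lemma phiF_smul {r : ℝ} (hr : 0 ≤ r) (z : E) :
    phiF K T (r • z) = r ^ 2 * phiF K T z := by
  rcases eq_or_lt_of_le hr with rfl | hr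
  · simp [phiF_zero]
  · refine le_antisymm (phiF_smul_le hr z) ?_
    have h := phiF_smul_le (K := K) (T := T) (show (0:ℝ) < r⁻¹ by positivity) (r • z)
    rw [smul_smul, inv_mul_cancel₀ hr.ne', one_smul] at h
    have h2 : r ^ 2 * phiF K T z ≤ r ^ 2 * ((r⁻¹) ^ 2 * phiF K T (r • z)) :=
      mul_le_mul_of_nonneg_left h (by positivity)
    rw [← mul_assoc] at h2
    have : r ^ 2 * r⁻¹ ^ 2 = 1 := by field_simp
    rwa [this, one_mul] at h2

lemma phiF_neg (hK : IsSymmConvexBody K) (hT : IsSymmConvexBody T) (z : E) :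
    phiF K T (-z) = phiF K T z := by
  have main : ∀ w : E, phiF K T (-w) ≤ phiF K T w := by
    intro w
    refine le_of_forall_pos_le_add fun θ hθ => ?_
    obtain ⟨x, y, hz, hlt⟩ := phiF_decomp (K := K) (T := T) w hθ
    have hdec : -w = -x + -y := by rw [hz]; abel
    calc phiF K T (-w) ≤ gauge K (-x) ^ 2 + gauge T (-y) ^ 2 := phiF_le hdec
      _ = gauge K x ^ 2 + gauge T y ^ 2 := by rw [hK.gauge_neg', hT.gauge_neg']
      _ ≤ phiF K T w + θ := hlt.le
  refine le_antisymm (main z) ?_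
  have := main (-z)
  rwa [neg_neg] at this

lemma phiF_convex_combo (hK : IsSymmConvexBody K) (hT : IsSymmConvexBody T)
    {sc tc : ℝ} (hs : 0 ≤ sc) (ht : 0 ≤ tc) (hst : sc + tc = 1) (z w : E) :
    phiF K T (sc • z + tc • w) ≤ sc * phiF K T z + tc * phiF K T w := by
  refine le_of_forall_pos_le_add fun θ hθ => ?_
  obtain ⟨x, y, hz, hltz⟩ := phiF_decomp (K := K) (T := T) z hθ
  obtain ⟨x', y', hw, hltw⟩ := phiF_decomp (K := K) (T := T) w hθ
  have hdec : sc • z + tc • w = (sc • x + tc • x') + (sc • y + tc • y') := by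
    rw [hz, hw, smul_add, smul_add]; abel
  have hxK : gauge K (sc • x + tc • x') ≤ sc * gauge K x + tc * gauge K x' := by
    calc gauge K (sc • x + tc • x') ≤ gauge K (sc • x) + gauge K (tc • x') := hK.gauge_add _ _
      _ = sc * gauge K x + tc * gauge K x' := by
          rw [gauge_smul_of_nonneg hs, gauge_smul_of_nonneg ht]; simp [smul_eq_mul]
  have hyT : gauge T (sc • y + tc • y') ≤ sc * gauge T y + tc * gauge T y' := by
    calc gauge T (sc • y + tc • y') ≤ gauge T (sc • y) + gauge T (tc • y') := hT.gauge_add _ _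
      _ = sc * gauge T y + tc * gauge T y' := by
          rw [gauge_smul_of_nonneg hs, gauge_smul_of_nonneg ht]; simp [smul_eq_mul]
  have sqK : gauge K (sc • x + tc • x') ^ 2 ≤ sc * gauge K x ^ 2 + tc * gauge K x' ^ 2 := by
    have h0 : (0:ℝ) ≤ gauge K (sc • x + tc • x') := gauge_nonneg _
    nlinarith [hxK, mul_nonneg (mul_nonneg hs ht) (sq_nonneg (gauge K x - gauge K x')), h0]
  have sqT : gauge T (sc • y + tc • y') ^ 2 ≤ sc * gauge T y ^ 2 + tc * gauge T y' ^ 2 := by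
    have h0T : (0:ℝ) ≤ gauge T (sc • y + tc • y') := gauge_nonneg _
    nlinarith [hyT, mul_nonneg (mul_nonneg hs ht) (sq_nonneg (gauge T y - gauge T y')), h0T]
  calc phiF K T (sc • z + tc • w)
      ≤ gauge K (sc • x + tc • x') ^ 2 + gauge T (sc • y + tc • y') ^ 2 := phiF_le hdec
    _ ≤ sc * (gauge K x ^ 2 + gauge T y ^ 2) + tc * (gauge K x' ^ 2 + gauge T y' ^ 2) := by
        linarith
    _ ≤ sc * (phiF K T z + θ) + tc * (phiF K T w + θ) := by
        have h1 := mul_le_mul_of_nonneg_left hltz.le hs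
        have h2 := mul_le_mul_of_nonneg_left hltw.le ht
        linarith
    _ = sc * phiF K T z + tc * phiF K T w + θ := by
        have hθ' : sc * θ + tc * θ = θ := by rw [← add_mul, hst, one_mul]
        rw [mul_add, mul_add]; linarith

end Phi

section Sqrt

open scoped Pointwise

variable {E : Type*} [NormedAddCommGroup E] [NormedSpace ℝ E] {K T : Set E}

lemma sqrt_add_le' {x θ : ℝ} (hx : 0 ≤ x) (hθ : 0 ≤ θ) :
    Real.sqrt (x + θ) ≤ Real.sqrt x + Real.sqrt θ := by
  have h1 : x + θ ≤ (Real.sqrt x + Real.sqrt θ) ^ 2 := by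
    nlinarith [Real.sq_sqrt hx, Real.sq_sqrt hθ,
      mul_nonneg (Real.sqrt_nonneg x) (Real.sqrt_nonneg θ)]
  have h2 := Real.sqrt_le_sqrt h1
  rwa [Real.sqrt_sq (by positivity)] at h2

lemma mink_sq {a b a' b' : ℝ} (ha : 0 ≤ a) (hb : 0 ≤ b) (ha' : 0 ≤ a') (hb' : 0 ≤ b') :
    (a + a') ^ 2 + (b + b') ^ 2
      ≤ (Real.sqrt (a^2 + b^2) + Real.sqrt (a'^2 + b'^2)) ^ 2 := by
  have hP : Real.sqrt (a^2+b^2) ^ 2 = a^2+b^2 := Real.sq_sqrt (by positivity)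
  have hP' : Real.sqrt (a'^2+b'^2) ^ 2 = a'^2+b'^2 := Real.sq_sqrt (by positivity)
  have key : a*a' + b*b' ≤ Real.sqrt (a^2+b^2) * Real.sqrt (a'^2+b'^2) := by
    rw [← Real.sqrt_mul (by positivity)]
    have h1 : a*a' + b*b' = Real.sqrt ((a*a' + b*b')^2) :=
      (Real.sqrt_sq (by positivity)).symm
    rw [h1]
    apply Real.sqrt_le_sqrt
    nlinarith [sq_nonneg (a*b' - a'*b)]
  nlinarith [key, hP, hP']

lemma sqrt_phiF_add (hK : IsSymmConvexBody K) (hT : IsSymmConvexBody T) (z w : E) :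
    Real.sqrt (phiF K T (z + w)) ≤ Real.sqrt (phiF K T z) + Real.sqrt (phiF K T w) := by
  refine le_of_forall_pos_le_add fun ε hε => ?_
  have hθ : (0:ℝ) < (ε/2)^2 := by positivity
  obtain ⟨x, y, hz, hltz⟩ := phiF_decomp (K := K) (T := T) z hθ
  obtain ⟨x', y', hw, hltw⟩ := phiF_decomp (K := K) (T := T) w hθ
  have hdec : z + w = (x + x') + (y + y') := by rw [hz, hw]; abel
  have h1 : phiF K T (z + w) ≤ gauge K (x + x') ^ 2 + gauge T (y + y') ^ 2 := phiF_le hdec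
  have h2 : gauge K (x + x') ^ 2 ≤ (gauge K x + gauge K x') ^ 2 := by
    have := hK.gauge_add x x'
    nlinarith [gauge_nonneg (s := K) (x + x'), this]
  have h2' : gauge T (y + y') ^ 2 ≤ (gauge T y + gauge T y') ^ 2 := by
    have := hT.gauge_add y y'
    nlinarith [gauge_nonneg (s := T) (y + y'), this]
  have h3 := mink_sq (gauge_nonneg (s := K) x) (gauge_nonneg (s := T) y)
    (gauge_nonneg (s := K) x') (gauge_nonneg (s := T) y')
  have h4 : Real.sqrt (gauge K x ^2 + gauge T y ^2) ≤ Real.sqrt (phiF K T z + (ε/2)^2) :=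
    Real.sqrt_le_sqrt hltz.le
  have h4' : Real.sqrt (gauge K x' ^2 + gauge T y' ^2) ≤ Real.sqrt (phiF K T w + (ε/2)^2) :=
    Real.sqrt_le_sqrt hltw.le
  have h5 : phiF K T (z + w)
      ≤ (Real.sqrt (phiF K T z + (ε/2)^2) + Real.sqrt (phiF K T w + (ε/2)^2)) ^ 2 := by
    have hs1 : (0:ℝ) ≤ Real.sqrt (gauge K x ^2 + gauge T y ^2) := Real.sqrt_nonneg _
    have hs2 : (0:ℝ) ≤ Real.sqrt (gauge K x' ^2 + gauge T y' ^2) := Real.sqrt_nonneg _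
    nlinarith [h1, h2, h2', h3, h4, h4', Real.sqrt_nonneg (phiF K T z + (ε/2)^2),
      Real.sqrt_nonneg (phiF K T w + (ε/2)^2)]
  have h6 := Real.sqrt_le_sqrt h5
  rw [Real.sqrt_sq (by positivity)] at h6
  have h7 : Real.sqrt (phiF K T z + (ε/2)^2) ≤ Real.sqrt (phiF K T z) + ε/2 := by
    have := sqrt_add_le' (phiF_nonneg (K := K) (T := T) z) hθ.le
    rwa [Real.sqrt_sq (by positivity)] at this
  have h7' : Real.sqrt (phiF K T w + (ε/2)^2) ≤ Real.sqrt (phiF K T w) + ε/2 := by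
    have := sqrt_add_le' (phiF_nonneg (K := K) (T := T) w) hθ.le
    rwa [Real.sqrt_sq (by positivity)] at this
  linarith

lemma norm_sq_le_phiF (hK : IsSymmConvexBody K) (hT : IsSymmConvexBody T) :
    ∃ R > 0, ∀ z : E, ‖z‖ ^ 2 ≤ R * phiF K T z := by
  obtain ⟨RK, hRK, hbK⟩ := hK.exists_norm_le
  obtain ⟨RT, hRT, hbT⟩ := hT.exists_norm_le
  set R := max RK RT with hR_def
  have hR : 0 < R := lt_of_lt_of_le hRK (le_max_left _ _)
  refine ⟨2 * R ^ 2, by positivity, fun z => ?_⟩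
  refine le_of_forall_pos_le_add fun ε hε => ?_
  obtain ⟨x, y, hz, hlt⟩ := phiF_decomp (K := K) (T := T) z
    (show (0:ℝ) < ε / (2 * R ^ 2) by positivity)
  have h1 : ‖z‖ ≤ R * (gauge K x + gauge T y) := by
    calc ‖z‖ = ‖x + y‖ := by rw [hz]
      _ ≤ ‖x‖ + ‖y‖ := norm_add_le x y
      _ ≤ RK * gauge K x + RT * gauge T y := add_le_add (hbK x) (hbT y)
      _ ≤ R * (gauge K x + gauge T y) := by
          have g1 : RK * gauge K x ≤ R * gauge K x :=
            mul_le_mul_of_nonneg_right (le_max_left _ _) (gauge_nonneg _)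
          have g2 : RT * gauge T y ≤ R * gauge T y :=
            mul_le_mul_of_nonneg_right (le_max_right _ _) (gauge_nonneg _)
          rw [mul_add]; linarith
  have h2 : ‖z‖ ^ 2 ≤ R ^ 2 * (gauge K x + gauge T y) ^ 2 := by
    nlinarith [norm_nonneg z, h1]
  have h3 : (gauge K x + gauge T y) ^ 2 ≤ 2 * (gauge K x ^ 2 + gauge T y ^ 2) := by
    nlinarith [sq_nonneg (gauge K x - gauge T y)]
  have h4 : gauge K x ^ 2 + gauge T y ^ 2 ≤ phiF K T z + ε / (2 * R ^ 2) := hlt.le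
  have hR2 : (0:ℝ) < R ^ 2 := by positivity
  calc ‖z‖ ^ 2 ≤ R ^ 2 * (2 * (phiF K T z + ε / (2 * R ^ 2))) := by nlinarith [h2, h3, h4]
    _ = 2 * R ^ 2 * phiF K T z + ε := by field_simp

lemma phiF_le_norm (hK : IsSymmConvexBody K) :
    ∃ r > 0, ∀ z : E, phiF K T z ≤ (‖z‖ / r) ^ 2 := by
  obtain ⟨r, hr, hgr⟩ := hK.exists_gauge_le
  refine ⟨r, hr, fun z => ?_⟩
  calc phiF K T z ≤ gauge K z ^ 2 := phiF_le_gauge_sq z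
    _ ≤ (‖z‖ / r) ^ 2 := by
        have := hgr z
        nlinarith [gauge_nonneg (s := K) z]

lemma gauge_fireySum (z : E) :
    gauge (fireySum K T) z = Real.sqrt (phiF K T z) := by
  have hset : {r : ℝ | 0 < r ∧ z ∈ r • fireySum K T}
      = {r : ℝ | 0 < r ∧ Real.sqrt (phiF K T z) ≤ r} := by
    ext r
    simp only [Set.mem_setOf_eq]
    refine and_congr_right fun hr => ?_
    rw [fireySum_eq, Set.mem_smul_set_iff_inv_smul_mem₀ hr.ne', Set.mem_setOf_eq,
      phiF_smul (inv_nonneg.2 hr.le)]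
    have hiff : (r⁻¹ ^ 2 * phiF K T z ≤ 1) ↔ phiF K T z ≤ r ^ 2 := by
      rw [inv_pow, inv_mul_le_iff₀ (by positivity : (0:ℝ) < r ^ 2), mul_one]
    rw [hiff]
    constructor
    · intro h
      have := Real.sqrt_le_sqrt h
      rwa [Real.sqrt_sq hr.le] at this
    · intro h
      have h2 : Real.sqrt (phiF K T z) ^ 2 ≤ r ^ 2 :=
        pow_le_pow_left₀ (Real.sqrt_nonneg _) h 2
      rwa [Real.sq_sqrt (phiF_nonneg z)] at h2
  rw [show gauge (fireySum K T) z
      = sInf {r : ℝ | 0 < r ∧ z ∈ r • fireySum K T} from rfl, hset]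
  rcases eq_or_lt_of_le (Real.sqrt_nonneg (phiF K T z)) with h0 | hpos
  · rw [← h0]
    have : {r : ℝ | 0 < r ∧ (0:ℝ) ≤ r} = Set.Ioi 0 := by
      ext r; exact ⟨fun ⟨h, _⟩ => h, fun h => ⟨h, le_of_lt h⟩⟩
    rw [this]
    exact csInf_Ioi
  · have : {r : ℝ | 0 < r ∧ Real.sqrt (phiF K T z) ≤ r} = Set.Ici (Real.sqrt (phiF K T z)) := by
      ext r; exact ⟨fun ⟨_, h⟩ => h, fun h => ⟨lt_of_lt_of_le hpos h, h⟩⟩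
    rw [this]
    exact csInf_Ici

lemma phiF_strong (hK : IsSymmConvexBody K) (hT : IsSymmConvexBody T)
    {γK γT : ℝ} (hγK : 0 < γK) (hγT : 0 < γT) (hγK4 : γK ≤ 1/4) (hγT4 : γT ≤ 1/4)
    (h2K : IsTwoConvex K γK) (h2T : IsTwoConvex T γT) (z w : E) :
    phiF K T ((2:ℝ)⁻¹ • (z + w)) + (min γK γT / 4) * phiF K T (z - w)
      ≤ (phiF K T z + phiF K T w) / 2 := by
  have hm0 : 0 < min γK γT := lt_min hγK hγT
  refine le_of_forall_pos_le_add fun θ hθ => ?_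
  obtain ⟨x, y, hz, hltz⟩ := phiF_decomp (K := K) (T := T) z hθ
  obtain ⟨x', y', hw, hltw⟩ := phiF_decomp (K := K) (T := T) w hθ
  have hdec : (2:ℝ)⁻¹ • (z + w) = (2:ℝ)⁻¹ • (x + x') + (2:ℝ)⁻¹ • (y + y') := by
    rw [hz, hw, ← smul_add]; congr 1; abel
  have h1 : phiF K T ((2:ℝ)⁻¹ • (z + w))
      ≤ gauge K ((2:ℝ)⁻¹ • (x + x')) ^ 2 + gauge T ((2:ℝ)⁻¹ • (y + y')) ^ 2 :=
    phiF_le hdec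
  have h2 := gauge_sq_strong hK hγK hγK4 h2K x x'
  have h3 := gauge_sq_strong hT hγT hγT4 h2T y y'
  have hdec2 : (2:ℝ)⁻¹ • (z - w) = (2:ℝ)⁻¹ • (x - x') + (2:ℝ)⁻¹ • (y - y') := by
    rw [hz, hw, ← smul_add]; congr 1; abel
  have h4 : phiF K T ((2:ℝ)⁻¹ • (z - w))
      ≤ gauge K ((2:ℝ)⁻¹ • (x - x')) ^ 2 + gauge T ((2:ℝ)⁻¹ • (y - y')) ^ 2 :=
    phiF_le hdec2
  have h5 : phiF K T ((2:ℝ)⁻¹ • (z - w)) = (2:ℝ)⁻¹ ^ 2 * phiF K T (z - w) :=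
    phiF_smul (by norm_num) _
  have hKm : min γK γT * gauge K ((2:ℝ)⁻¹ • (x - x')) ^ 2
      ≤ γK * gauge K ((2:ℝ)⁻¹ • (x - x')) ^ 2 :=
    mul_le_mul_of_nonneg_right (min_le_left _ _) (sq_nonneg _)
  have hTm : min γK γT * gauge T ((2:ℝ)⁻¹ • (y - y')) ^ 2
      ≤ γT * gauge T ((2:ℝ)⁻¹ • (y - y')) ^ 2 :=
    mul_le_mul_of_nonneg_right (min_le_right _ _) (sq_nonneg _)
  have h6 : min γK γT * phiF K T ((2:ℝ)⁻¹ • (z - w))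
      ≤ min γK γT * (gauge K ((2:ℝ)⁻¹ • (x - x')) ^ 2 + gauge T ((2:ℝ)⁻¹ • (y - y')) ^ 2) :=
    mul_le_mul_of_nonneg_left h4 hm0.le
  have h7 : min γK γT / 4 * phiF K T (z - w) = min γK γT * ((2:ℝ)⁻¹ ^ 2 * phiF K T (z - w)) := by
    ring
  rw [h7, ← h5]
  nlinarith [h1, h2, h3, h6, hKm, hTm, hltz, hltw]

end Sqrt

section GammaBound

variable {E : Type*} [NormedAddCommGroup E] [NormedSpace ℝ E] {K : Set E}

lemma gamma_le_quarter (hK : IsSymmConvexBody K) {γ : ℝ} (h2 : IsTwoConvex K γ)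
    {v : E} (hv : v ≠ 0) : γ ≤ 1/4 := by
  obtain ⟨R, hR, hRb⟩ := hK.exists_norm_le
  have hgv : 0 < gauge K v := by
    by_contra h
    push_neg at h
    have h0 : gauge K v = 0 := le_antisymm h (gauge_nonneg v)
    have := hRb v
    rw [h0, mul_zero] at this
    exact hv (norm_le_zero_iff.1 this)
  set w := (gauge K v)⁻¹ • v with hw_def
  have hgw : gauge K w = 1 := by
    rw [hw_def, gauge_smul_of_nonneg (inv_nonneg.2 hgv.le), smul_eq_mul,
      inv_mul_cancel₀ hgv.ne']
  have hmem : (1:ℝ) ∈ { d | ∃ x y : E, gauge K x ≤ 1 ∧ gauge K y ≤ 1 ∧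
      (2:ℝ) ≤ gauge K (x - y) ∧ d = 1 - gauge K ((2:ℝ)⁻¹ • (x + y)) } := by
    refine ⟨w, -w, le_of_eq hgw, le_of_eq (by rw [hK.gauge_neg', hgw]), ?_, ?_⟩
    · have h1 : w - -w = (2:ℝ) • w := by rw [sub_neg_eq_add, two_smul]
      rw [h1, gauge_smul_of_nonneg (by norm_num : (0:ℝ) ≤ 2), smul_eq_mul, hgw]
      norm_num
    · have h1 : w + -w = (0 : E) := add_neg_cancel w
      rw [h1, smul_zero, gauge_zero]
      norm_num
  have hle : modulusOfConvexity K 2 ≤ 1 :=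
    csInf_le ⟨0, fun d hd => modSet_bddBelow hK 2 d hd⟩ hmem
  have := h2 2 (by norm_num) (le_refl 2)
  nlinarith

end GammaBound

theorem twoConvex_fireySum {n : ℕ}
    (K T : Set (EuclideanSpace ℝ (Fin n))) (γK γT : ℝ)
    (hK : IsSymmConvexBody K) (hT : IsSymmConvexBody T)
    (hγK : 0 < γK) (hγT : 0 < γT)
    (h2K : IsTwoConvex K γK) (h2T : IsTwoConvex T γT) :
    IsSymmConvexBody (fireySum K T) ∧
    IsTwoConvex (fireySum K T) (min γK γT / 8) := by
  by_cases hEx : ∃ v : EuclideanSpace ℝ (Fin n), v ≠ 0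
  swap
  · -- trivial space: the hypotheses are contradictory
    exfalso
    push_neg at hEx
    have hempty : { d | ∃ x y : EuclideanSpace ℝ (Fin n), gauge K x ≤ 1 ∧ gauge K y ≤ 1 ∧
        (1:ℝ) ≤ gauge K (x - y) ∧ d = 1 - gauge K ((2:ℝ)⁻¹ • (x + y)) } = ∅ := by
      ext d
      simp only [Set.mem_setOf_eq, Set.mem_empty_iff_false, iff_false, not_exists]
      rintro x y ⟨-, -, h3, -⟩
      have hxy : x - y = 0 := by rw [hEx x, hEx y, sub_zero]
      rw [hxy, gauge_zero] at h3
      linarith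
    have hmod : modulusOfConvexity K 1 = 0 := by
      rw [modulusOfConvexity, hempty, Real.sInf_empty]
    have := h2K 1 one_pos (by norm_num)
    rw [hmod] at this
    nlinarith
  obtain ⟨v0, hv0⟩ := hEx
  have hγK4 : γK ≤ 1/4 := gamma_le_quarter hK h2K hv0
  have hγT4 : γT ≤ 1/4 := gamma_le_quarter hT h2T hv0
  obtain ⟨R, hR, hRb⟩ := norm_sq_le_phiF hK hT
  obtain ⟨r, hr, hrb⟩ := phiF_le_norm (T := T) hK
  have sqle : ∀ z : EuclideanSpace ℝ (Fin n),
      Real.sqrt (phiF K T z) ≤ 1 ↔ phiF K T z ≤ 1 := by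
    intro z
    constructor
    · intro h
      have h2 : Real.sqrt (phiF K T z) ^ 2 ≤ 1 := by nlinarith [Real.sqrt_nonneg (phiF K T z)]
      rwa [Real.sq_sqrt (phiF_nonneg z)] at h2
    · intro h
      have := Real.sqrt_le_sqrt h
      rwa [Real.sqrt_one] at this
  -- Lipschitz continuity of the Firey gauge
  have hlip : ∀ z w : EuclideanSpace ℝ (Fin n),
      dist (Real.sqrt (phiF K T z)) (Real.sqrt (phiF K T w)) ≤ (1/r) * dist z w := by
    intro z w
    have hd : ∀ u u' : EuclideanSpace ℝ (Fin n),
        Real.sqrt (phiF K T u) - Real.sqrt (phiF K T u') ≤ (1/r) * ‖u - u'‖ := by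
      intro u u'
      have h1 := sqrt_phiF_add hK hT u' (u - u')
      rw [add_sub_cancel] at h1
      have h2 : Real.sqrt (phiF K T (u - u')) ≤ ‖u - u'‖ / r := by
        have h3 := Real.sqrt_le_sqrt (hrb (u - u'))
        rwa [Real.sqrt_sq (by positivity)] at h3
      have : (1/r) * ‖u - u'‖ = ‖u - u'‖ / r := by ring
      linarith
    rw [Real.dist_eq, dist_eq_norm]
    rw [abs_sub_le_iff]
    constructor
    · exact hd z w
    · have := hd w z
      rwa [show ‖w - z‖ = ‖z - w‖ from norm_sub_rev w z] at this
  have hcont : Continuous fun z : EuclideanSpace ℝ (Fin n) => Real.sqrt (phiF K T z) := by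
    have : LipschitzWith (Real.toNNReal (1/r)) fun z => Real.sqrt (phiF K T z) := by
      apply LipschitzWith.of_dist_le_mul
      intro z w
      have := hlip z w
      rwa [Real.coe_toNNReal (1/r) (by positivity)]
    exact this.continuous
  have hFeq : fireySum K T
      = (fun z : EuclideanSpace ℝ (Fin n) => Real.sqrt (phiF K T z)) ⁻¹' Set.Iic 1 := by
    ext z
    rw [fireySum_eq, Set.mem_setOf_eq, Set.mem_preimage, Set.mem_Iic, sqle]
  have hclosed : IsClosed (fireySum K T) := by
    rw [hFeq]; exact isClosed_Iic.preimage hcont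
  have hbdd : Bornology.IsBounded (fireySum K T) := by
    apply (Metric.isBounded_closedBall (x := (0 : EuclideanSpace ℝ (Fin n)))
      (r := Real.sqrt R)).subset
    intro z hz
    rw [fireySum_eq, Set.mem_setOf_eq] at hz
    rw [Metric.mem_closedBall, dist_zero_right]
    have h1 : ‖z‖ ^ 2 ≤ R := by
      have := hRb z
      nlinarith [hR]
    have h2 := Real.sqrt_le_sqrt h1
    rwa [Real.sqrt_sq (norm_nonneg z)] at h2
  have hconv : Convex ℝ (fireySum K T) := by
    rw [fireySum_eq]
    intro z hz w hw a b ha hb hab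
    rw [Set.mem_setOf_eq] at hz hw ⊢
    have := phiF_convex_combo hK hT ha hb hab z w
    have h1 := mul_le_mul_of_nonneg_left hz ha
    have h2 := mul_le_mul_of_nonneg_left hw hb
    calc phiF K T (a • z + b • w) ≤ a * phiF K T z + b * phiF K T w := this
      _ ≤ a * 1 + b * 1 := by linarith
      _ = 1 := by linarith
  have hint : (interior (fireySum K T)).Nonempty := by
    refine ⟨0, ?_⟩
    have hsub : Metric.ball (0 : EuclideanSpace ℝ (Fin n)) r ⊆ fireySum K T := by
      intro z hz
      rw [Metric.mem_ball, dist_zero_right] at hz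
      rw [fireySum_eq, Set.mem_setOf_eq]
      calc phiF K T z ≤ (‖z‖ / r) ^ 2 := hrb z
        _ ≤ 1 := by
            have h1 : ‖z‖ / r ≤ 1 := by rw [div_le_one hr]; exact hz.le
            have h2 : 0 ≤ ‖z‖ / r := by positivity
            nlinarith
    exact interior_maximal hsub Metric.isOpen_ball (Metric.mem_ball_self hr)
  have hsymm : fireySum K T = -fireySum K T := by
    ext z
    rw [Set.mem_neg, fireySum_eq, Set.mem_setOf_eq, Set.mem_setOf_eq, phiF_neg hK hT]
  have hcomp : IsCompact (fireySum K T) := Metric.isCompact_of_isClosed_isBounded hclosed hbdd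
  refine ⟨⟨hcomp, hconv, hint, hsymm⟩, ?_⟩
  -- Part 2 : two-convexity
  intro ε hε0 hε2
  have hm0 : 0 < min γK γT := lt_min hγK hγT
  have hm4 : min γK γT ≤ 1/4 := le_trans (min_le_left _ _) hγK4
  apply le_csInf
  · -- nonemptiness of the modulus set
    have hφv : 0 < phiF K T v0 := by
      have h1 := hRb v0
      have h2 : 0 < ‖v0‖ ^ 2 := by
        have := norm_pos_iff.2 hv0
        positivity
      nlinarith [phiF_nonneg (K := K) (T := T) v0]
    set c := Real.sqrt (phiF K T v0) with hc_def
    have hc : 0 < c := Real.sqrt_pos.2 hφv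
    set w := c⁻¹ • v0 with hw_def
    have hφw : phiF K T w = 1 := by
      rw [hw_def, phiF_smul (inv_nonneg.2 hc.le), inv_pow, hc_def,
        Real.sq_sqrt hφv.le, inv_mul_cancel₀ hφv.ne']
    set x := (ε/2) • w with hx_def
    have hφx : phiF K T x = (ε/2)^2 := by
      rw [hx_def, phiF_smul (by positivity : (0:ℝ) ≤ ε/2), hφw, mul_one]
    have hgx : gauge (fireySum K T) x = ε/2 := by
      rw [gauge_fireySum, hφx, Real.sqrt_sq (by positivity)]
    refine ⟨1 - gauge (fireySum K T) ((2:ℝ)⁻¹ • (x + -x)), x, -x, ?_, ?_, ?_, rfl⟩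
    · rw [hgx]; linarith
    · rw [gauge_fireySum, phiF_neg hK hT, ← gauge_fireySum, hgx]; linarith
    · have h1 : x - -x = (2:ℝ) • x := by rw [sub_neg_eq_add, two_smul]
      rw [h1, gauge_fireySum, phiF_smul (by norm_num : (0:ℝ) ≤ 2), hφx]
      have : (2:ℝ)^2 * (ε/2)^2 = ε^2 := by ring
      rw [this, Real.sqrt_sq hε0.le]
  · -- lower bound on every element
    rintro d ⟨x, y, h1, h2, h3, rfl⟩
    rw [gauge_fireySum] at h1 h2 h3
    have hφx : phiF K T x ≤ 1 := (sqle x).1 h1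
    have hφy : phiF K T y ≤ 1 := (sqle y).1 h2
    have hφxy : ε ^ 2 ≤ phiF K T (x - y) := by
      have h4 := pow_le_pow_left₀ hε0.le h3 2
      rwa [Real.sq_sqrt (phiF_nonneg _)] at h4
    have hstrong := phiF_strong hK hT hγK hγT hγK4 hγT4 h2K h2T x y
    have hmid : phiF K T ((2:ℝ)⁻¹ • (x + y)) ≤ 1 - (min γK γT / 4) * ε ^ 2 := by
      have h5 : (min γK γT / 4) * ε ^ 2 ≤ (min γK γT / 4) * phiF K T (x - y) :=
        mul_le_mul_of_nonneg_left hφxy (by positivity)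
      linarith
    have hu1 : (min γK γT / 4) * ε ^ 2 ≤ 1/4 := by nlinarith
    have hu0 : 0 ≤ (min γK γT / 4) * ε ^ 2 := by positivity
    have hsq : Real.sqrt (phiF K T ((2:ℝ)⁻¹ • (x + y)))
        ≤ 1 - (min γK γT / 8) * ε ^ 2 := by
      have h6 : phiF K T ((2:ℝ)⁻¹ • (x + y)) ≤ (1 - (min γK γT / 8) * ε ^ 2) ^ 2 := by
        nlinarith [hmid, hu0]
      have h7 := Real.sqrt_le_sqrt h6
      rwa [Real.sqrt_sq (by nlinarith)] at h7
    rw [gauge_fireySum]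
    linarith

end
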